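/- Let z be a nonzero complex number, set Q := (z + z^{−1})^2, and assume Q ≠ 0, z^2 + z^{−2} ≠ 0 (equivalently Q ≠ 2), z^4 + z^{−4} ≠ 0 (equivalently Q^2 − 4Q + 2 ≠ 0) and z^6 + z^{−6} ≠ 0 (equivalently (Q − 2)(Q^2 − 4Q + 1) ≠ 0). Then (2/Q^3) · ∑_{m=−3}^{3} binom(6, 3+m) / (z^{2m} + z^{−2m}) = 4(5Q^2 − 35Q + 61) / ((Q − 2)(Q^2 − 4Q + 2)(Q^2 − 4Q + 1)). -/

import Mathlib

open Finset

/-- eq. (4.31c) of the paper. Let `z` be a nonzero complex number, set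
`Q := (z + z⁻¹)^2`, and assume `Q ≠ 0`, `z^2 + z^(-2) ≠ 0` (equivalently `Q ≠ 2`),
`z^4 + z^(-4) ≠ 0` (equivalently `Q^2 - 4Q + 2 ≠ 0`) and `z^6 + z^(-6) ≠ 0`
(equivalently `(Q - 2)(Q^2 - 4Q + 1) ≠ 0`). Then
`(2/Q^3) ∑_{m=-3}^{3} binom(6, 3+m) / (z^(2m) + z^(-2m))
  = 4(5Q^2 - 35Q + 61)/((Q - 2)(Q^2 - 4Q + 2)(Q^2 - 4Q + 1))`. -/
theorem typeD_multiplicity_k6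
    (z : ℂ) (hz : z ≠ 0) (Q : ℂ) (hQdef : Q = (z + z⁻¹) ^ 2)
    (hQ0 : Q ≠ 0) (h2 : z ^ (2 : ℤ) + z ^ (-2 : ℤ) ≠ 0)
    (h4 : z ^ (4 : ℤ) + z ^ (-4 : ℤ) ≠ 0)
    (h6 : z ^ (6 : ℤ) + z ^ (-6 : ℤ) ≠ 0) :
    (2 / Q ^ 3) * ∑ m ∈ Finset.Icc (-3 : ℤ) 3,
      ((Nat.choose 6 ((3 : ℤ) + m).toNat : ℂ)) / (z ^ (2 * m) + z ^ (-(2 * m)))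
    = 4 * (5 * Q ^ 2 - 35 * Q + 61) /
        ((Q - 2) * (Q ^ 2 - 4 * Q + 2) * (Q ^ 2 - 4 * Q + 1)) := by
  have hIcc : Finset.Icc (-3 : ℤ) 3 = {-3, -2, -1, 0, 1, 2, 3} := by decide
  have key : z * z⁻¹ = 1 := mul_inv_cancel₀ hz
  have d2 : z ^ 2 + (z ^ 2)⁻¹ = Q - 2 := by
    rw [hQdef, ← inv_pow]; linear_combination (-2 : ℂ) * key
  have d4 : z ^ 4 + (z ^ 4)⁻¹ = Q ^ 2 - 4 * Q + 2 := by
    rw [hQdef, ← inv_pow]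
    linear_combination (-4 * z ^ 2 - 6 * z * z⁻¹ - 4 * z⁻¹ ^ 2 + 2) * key
  have d6 : z ^ 6 + (z ^ 6)⁻¹ = (Q - 2) * (Q ^ 2 - 4 * Q + 1) := by
    rw [hQdef, ← inv_pow]
    linear_combination (-6 * z ^ 4 - 15 * z ^ 3 * z⁻¹ - 20 * z ^ 2 * z⁻¹ ^ 2 + 9 * z ^ 2
      - 15 * z * z⁻¹ ^ 3 + 16 * z * z⁻¹ - 6 * z⁻¹ ^ 4 + 9 * z⁻¹ ^ 2 - 2) * key
  have c2 : z ^ (2 : ℤ) + z ^ (-2 : ℤ) = z ^ 2 + (z ^ 2)⁻¹ := by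
    rw [zpow_neg, show (2 : ℤ) = ((2 : ℕ) : ℤ) from rfl, zpow_natCast]
  have c4 : z ^ (4 : ℤ) + z ^ (-4 : ℤ) = z ^ 4 + (z ^ 4)⁻¹ := by
    rw [zpow_neg, show (4 : ℤ) = ((4 : ℕ) : ℤ) from rfl, zpow_natCast]
  have c6 : z ^ (6 : ℤ) + z ^ (-6 : ℤ) = z ^ 6 + (z ^ 6)⁻¹ := by
    rw [zpow_neg, show (6 : ℤ) = ((6 : ℕ) : ℤ) from rfl, zpow_natCast]
  have hA : Q - 2 ≠ 0 := fun h => h2 (by rw [c2, d2, h])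
  have hB : Q ^ 2 - 4 * Q + 2 ≠ 0 := fun h => h4 (by rw [c4, d4, h])
  have hC : Q ^ 2 - 4 * Q + 1 ≠ 0 := fun h => h6 (by rw [c6, d6, h, mul_zero])
  have D2 : z ^ (2 : ℤ) + z ^ (-2 : ℤ) = Q - 2 := c2.trans d2
  have D4 : z ^ (4 : ℤ) + z ^ (-4 : ℤ) = Q ^ 2 - 4 * Q + 2 := c4.trans d4
  have D6 : z ^ (6 : ℤ) + z ^ (-6 : ℤ) = (Q - 2) * (Q ^ 2 - 4 * Q + 1) := c6.trans d6
  have D2' : z ^ (-2 : ℤ) + z ^ (2 : ℤ) = Q - 2 := (add_comm _ _).trans D2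
  have D4' : z ^ (-4 : ℤ) + z ^ (4 : ℤ) = Q ^ 2 - 4 * Q + 2 := (add_comm _ _).trans D4
  have D6' : z ^ (-6 : ℤ) + z ^ (6 : ℤ) = (Q - 2) * (Q ^ 2 - 4 * Q + 1) :=
    (add_comm _ _).trans D6
  rw [hIcc, Finset.sum_insert (by decide), Finset.sum_insert (by decide),
    Finset.sum_insert (by decide), Finset.sum_insert (by decide),
    Finset.sum_insert (by decide), Finset.sum_insert (by decide),
    Finset.sum_singleton]
  simp only [show ((2 : ℤ) * -3) = -6 by decide, show ((2 : ℤ) * -2) = -4 by decide,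
    show ((2 : ℤ) * -1) = -2 by decide, show ((2 : ℤ) * 0) = 0 by decide,
    show ((2 : ℤ) * 1) = 2 by decide, show ((2 : ℤ) * 2) = 4 by decide,
    show ((2 : ℤ) * 3) = 6 by decide, show (-(-6 : ℤ)) = 6 by decide,
    show (-(-4 : ℤ)) = 4 by decide, show (-(-2 : ℤ)) = 2 by decide,
    show (-(0 : ℤ)) = 0 by decide,
    show ((3 : ℤ) + -3).toNat = 0 by decide, show ((3 : ℤ) + -2).toNat = 1 by decide,
    show ((3 : ℤ) + -1).toNat = 2 by decide, show ((3 : ℤ) + 0).toNat = 3 by decide,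
    show ((3 : ℤ) + 1).toNat = 4 by decide, show ((3 : ℤ) + 2).toNat = 5 by decide,
    show ((3 : ℤ) + 3).toNat = 6 by decide, zpow_zero,
    show Nat.choose 6 0 = 1 by decide, show Nat.choose 6 1 = 6 by decide,
    show Nat.choose 6 2 = 15 by decide, show Nat.choose 6 3 = 20 by decide,
    show Nat.choose 6 4 = 15 by decide, show Nat.choose 6 5 = 6 by decide,
    show Nat.choose 6 6 = 1 by decide,
    D2, D4, D6, D2', D4', D6']
  push_cast
  trans (2 / Q ^ 3 * (10 + 30 / (Q - 2) + 12 / (Q ^ 2 - 4 * Q + 2)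
    + 2 / ((Q - 2) * (Q ^ 2 - 4 * Q + 1))))
  · ring
  · have hB2 : Q * (Q - 4) + 2 ≠ 0 := by rw [show Q * (Q - 4) + 2 = Q ^ 2 - 4 * Q + 2 by ring]; exact hB
    have hC2 : Q * (Q - 4) + 1 ≠ 0 := by rw [show Q * (Q - 4) + 1 = Q ^ 2 - 4 * Q + 1 by ring]; exact hC
    field_simp
    ring
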